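/- Let M be a multicell domain of G, V ⊆ ℝ[x,y] a linear subspace, d=(d₁,d₂,d₃)∈ℤ³_{≥0}, and r = min{d₁,d₂,d₃}. Then the strongly regular spline space is contained in the spline space with edge smoothness d, Ŝ^d(M,V) ⊆ S^d(M,V), and every f ∈ Ŝ^d(M,V) is globally of class C^r on M*, i.e., D_s f is continuous on M* for every s∈ℤ³_{≥0} with s₁+s₂+s₃ ≤ r. -/

import Mathlib

/- ## The three-directional (type-I) grid -/

noncomputable section

open MvPolynomial Set Function

/-- Points of the plane. -/
abbrev Pt := ℝ × ℝ

/-- Bivariate real polynomials `ℝ[x,y]`. -/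
abbrev BPoly := MvPolynomial (Fin 2) ℝ

/-- Evaluation of a bivariate polynomial at a point of the plane. -/
def evalP (q : BPoly) (p : Pt) : ℝ := MvPolynomial.eval ![p.1, p.2] q

/-- Triangles of the three-directional grid `G`:  `⟨v, false⟩` is the "lower"
triangle with vertices `v, v+(1,0), v+(1,1)`, and `⟨v, true⟩` is the "upper"
triangle with vertices `v, v+(0,1), v+(1,1)`. -/
structure Tri where
  v : ℤ × ℤ
  up : Bool
deriving DecidableEq

namespace Tri

/-- The open triangle in the plane realizing a combinatorial triangle. -/
def toSet (T : Tri) : Set Pt :=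
  if T.up then
    {p | (T.v.1 : ℝ) < p.1 ∧ p.1 - (T.v.1 : ℝ) < p.2 - (T.v.2 : ℝ) ∧ p.2 < (T.v.2 : ℝ) + 1}
  else
    {p | (T.v.2 : ℝ) < p.2 ∧ p.2 - (T.v.2 : ℝ) < p.1 - (T.v.1 : ℝ) ∧ p.1 < (T.v.1 : ℝ) + 1}

/-- The closed triangle. -/
def cl (T : Tri) : Set Pt := closure T.toSet

/-- The three lattice vertices of a triangle. -/
def vertices (T : Tri) : Finset (ℤ × ℤ) :=
  if T.up then {T.v, (T.v.1, T.v.2 + 1), (T.v.1 + 1, T.v.2 + 1)}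
  else {T.v, (T.v.1 + 1, T.v.2), (T.v.1 + 1, T.v.2 + 1)}

end Tri

/-- Edges of the grid: a lattice point together with a direction type
(`0 ↦ e₁ = (1,0)`, `1 ↦ e₂ = (0,1)`, `2 ↦ e₃ = (1,1)`); the edge of type `i`
at `v` joins `v` to `v + eᵢ`. -/
abbrev Edge := (ℤ × ℤ) × Fin 3

/-- The three direction vectors `e₁, e₂, e₃`. -/
def dirZ : Fin 3 → ℤ × ℤ := ![(1, 0), (0, 1), (1, 1)]

/-- The three edges of a triangle. -/
def Tri.edges (T : Tri) : Finset Edge :=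
  if T.up then {((T.v.1, T.v.2 + 1), 0), (T.v, 1), (T.v, 2)}
  else {(T.v, 0), ((T.v.1 + 1, T.v.2), 1), (T.v, 2)}

/-- The open segment realizing an edge. -/
def Edge.seg (ε : Edge) : Set Pt :=
  {p | ∃ t : ℝ, 0 < t ∧ t < 1 ∧
    p = ((ε.1.1 : ℝ) + t * ((dirZ ε.2).1 : ℝ), (ε.1.2 : ℝ) + t * ((dirZ ε.2).2 : ℝ))}

/-- `M*`: the union of the closed triangles of a multicell domain. -/
def Mstar (M : Finset Tri) : Set Pt := ⋃ T ∈ M, T.cl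

/-- `ℙ(M,V)`: continuous functions on `M*` whose restriction to each triangle
of `M` is the restriction of a polynomial in `V`. -/
def PP (M : Finset Tri) (V : Set BPoly) : Set (Pt → ℝ) :=
  {f | ContinuousOn f (Mstar M) ∧ ∀ T ∈ M, ∃ q ∈ V, EqOn f (evalP q) T.toSet}

/-- The diamond of an edge: union of the closed triangles of `M` having `ε`
as an edge. -/
def diamond (M : Finset Tri) (ε : Edge) : Set Pt :=
  ⋃ T ∈ M.filter (fun T => ε ∈ T.edges), T.cl

/-- The spline space with edge smoothness `d` on the multicell domain `M`:
piecewise polynomials (pieces from `V`) which are `C^{dᵢ}` on the diamond of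
every edge of type `i` of `M`. -/
def SplineSpace (M : Finset Tri) (V : Set BPoly) (d : Fin 3 → ℕ) : Set (Pt → ℝ) :=
  {f | f ∈ PP M V ∧
    ∀ ε : Edge, (∃ T ∈ M, ε ∈ T.edges) → ContDiffOn ℝ (d ε.2) f (diamond M ε)}

/-- Directional derivative of a polynomial along an integer vector. -/
def dirD (e : ℤ × ℤ) (q : BPoly) : BPoly :=
  (e.1 : ℝ) • MvPolynomial.pderiv (0 : Fin 2) q + (e.2 : ℝ) • MvPolynomial.pderiv (1 : Fin 2) q

/-- The mixed directional derivative operator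
`D_s = (∂_{e₁})^{s₁} (∂_{e₂})^{s₂} (∂_{e₃})^{s₃}`. -/
def Dmix (s : Fin 3 → ℕ) (q : BPoly) : BPoly :=
  (dirD (dirZ 0))^[s 0] ((dirD (dirZ 1))^[s 1] ((dirD (dirZ 2))^[s 2] q))

/-- The index sets `Iᵢ^d`; `I₁^d = {s | s₂+s₃ ≤ d₁}` and cyclically. -/
def Iset (d : Fin 3 → ℕ) (i : Fin 3) : Set (Fin 3 → ℕ) :=
  {s | s (i + 1) + s (i + 2) ≤ d i}

/-- Two triangles of the grid are adjacent if they are distinct and share an edge. -/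
def Adj (T T' : Tri) : Prop := T ≠ T' ∧ ∃ ε : Edge, ε ∈ T.edges ∧ ε ∈ T'.edges

/-- `c` is an edge-connected chain of length `m` from `T` to `T'`. -/
def TriIsChain (T T' : Tri) (m : ℕ) (c : ℕ → Tri) : Prop :=
  c 0 = T ∧ c m = T' ∧ ∀ k < m, Adj (c k) (c (k + 1))

/-- The set of types of the edges crossed by a chain. -/
def chainTypes (m : ℕ) (c : ℕ → Tri) : Set (Fin 3) :=
  {i | ∃ k < m, ∃ ε : Edge, ε.2 = i ∧ ε ∈ (c k).edges ∧ ε ∈ (c (k + 1)).edges}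

/-- Minimal length of an edge-connected chain between two triangles. -/
def minLen (T T' : Tri) : ℕ := sInf {m | ∃ c, TriIsChain T T' m c}

/-- The smoothness type `SmType(△,△')`: the types of the edges crossed by a
shortest edge-connected chain from `△` to `△'`. -/
def SmType (T T' : Tri) : Set (Fin 3) :=
  {i | ∃ c, TriIsChain T T' (minLen T T') c ∧ i ∈ chainTypes (minLen T T') c}

/-- `q` is the polynomial piece of `f` on the triangle `T`. -/
def IsPiece (f : Pt → ℝ) (T : Tri) (q : BPoly) : Prop := EqOn f (evalP q) T.toSet

/-- The strongly regular spline space `Ŝ^d(M,V)`: piecewise polynomials such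
that for any two triangles of `M` with intersecting closures, the derivatives
`D_s`, `s ∈ ⋂_{i ∈ SmType(△,△')} Iᵢ^d`, of the two polynomial pieces agree on the
intersection of the closures (i.e. `D_s f` is continuous there). -/
def StrongSpline (M : Finset Tri) (V : Set BPoly) (d : Fin 3 → ℕ) : Set (Pt → ℝ) :=
  {f | f ∈ PP M V ∧
    ∀ T ∈ M, ∀ T' ∈ M, (T.cl ∩ T'.cl).Nonempty →
      ∀ s : Fin 3 → ℕ, (∀ i ∈ SmType T T', s ∈ Iset d i) →
        ∀ q q' : BPoly, IsPiece f T q → IsPiece f T' q' →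
          ∀ x ∈ T.cl ∩ T'.cl, evalP (Dmix s q) x = evalP (Dmix s q') x}

/-- Kissing triangles: the closures intersect in exactly one point. -/
def Kissing (T T' : Tri) : Prop := ∃ p : Pt, T.cl ∩ T'.cl = {p}

/-- An over-concave vertex of `M`: exactly one triangle of `star(ν)` is
missing from `M`. -/
def OverConcave (M : Finset Tri) (ν : ℤ × ℤ) : Prop :=
  ∃! T : Tri, ν ∈ T.vertices ∧ T ∉ M

/- ## Type-I box splines -/

/-- The Courant hat function `B_{(1,1,1)}`: the piecewise linear function on
`G` supported on `star((1,1))` with value `1` at `(1,1)` and `0` at all other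
lattice points. -/
def hat (p : Pt) : ℝ :=
  max 0 (min (min (min p.1 p.2) (min (2 - p.1) (2 - p.2)))
             (min (1 - (p.1 - p.2)) (1 + (p.1 - p.2))))

/-- The type-I box spline `B_{(n₁,n₂,n₃)}`, defined by repeated directional
convolution starting from the Courant hat function (the result is independent
of the order of the convolutions); junk value `0` if some `nᵢ = 0`. -/
noncomputable def boxN : ℕ → ℕ → ℕ → Pt → ℝ
  | 0, _, _, _ => 0
  | _ + 1, 0, _, _ => 0
  | _ + 1, _ + 1, 0, _ => 0
  | 1, 1, 1, p => hat p
  | a + 2, b + 1, c + 1, p =>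
      ∫ t in (0:ℝ)..1, boxN (a + 1) (b + 1) (c + 1) (p.1 - t, p.2)
  | 1, b + 2, c + 1, p =>
      ∫ t in (0:ℝ)..1, boxN 1 (b + 1) (c + 1) (p.1, p.2 - t)
  | 1, 1, c + 2, p =>
      ∫ t in (0:ℝ)..1, boxN 1 1 (c + 1) (p.1 - t, p.2 - t)
  termination_by a b c _ => a + b + c
  decreasing_by all_goals omega

/-- The translate `B_n(· - w)` of the box spline. -/
def trBox (n₁ n₂ n₃ : ℕ) (w : ℤ × ℤ) (p : Pt) : ℝ :=
  boxN n₁ n₂ n₃ (p.1 - (w.1 : ℝ), p.2 - (w.2 : ℝ))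

/-- `Supp_n(△̂)`: lattice translates of `B_n` that do not vanish identically
on the triangle `T`. -/
def activeSet (n₁ n₂ n₃ : ℕ) (T : Tri) : Set (ℤ × ℤ) :=
  {w | ¬ ∀ p ∈ T.toSet, trBox n₁ n₂ n₃ w p = 0}

/-- `c` is the coefficient vector of the polynomial `q` with respect to the
active box-spline translates on `T`:  `q|_T = Σ_β λ_T^β(q)·β|_T`. -/
def Represents (n₁ n₂ n₃ : ℕ) (T : Tri) (q : BPoly) (c : (ℤ × ℤ) →₀ ℝ) : Prop :=
  ↑c.support ⊆ activeSet n₁ n₂ n₃ T ∧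
    ∀ p ∈ T.toSet, evalP q p = c.sum fun w a => a * trBox n₁ n₂ n₃ w p

/-- `V_n` (relative to the triangle `T`): polynomials whose restriction to `T`
is a linear combination of the active box-spline translates on `T`. -/
def VSpace (n₁ n₂ n₃ : ℕ) (T : Tri) : Set BPoly :=
  {q | ∃ c, Represents n₁ n₂ n₃ T q c}


lemma eval_aeval (v : Fin 2 → ℝ) (τ : Fin 2 → BPoly) (h : BPoly) :
    eval v (aeval τ h) = eval (fun i => eval v (τ i)) h := by
  rw [aeval_def, eval₂_comp_left (MvPolynomial.eval v) (algebraMap ℝ BPoly) τ h]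
  have : (MvPolynomial.eval v).comp (algebraMap ℝ BPoly) = RingHom.id ℝ := by ext x; simp
  rw [this]
  rfl

lemma evalPoly_aeval (t : ℝ) (τ : Fin 2 → Polynomial ℝ) (h : BPoly) :
    Polynomial.eval t (aeval τ h) = eval (fun i => Polynomial.eval t (τ i)) h := by
  have := eval₂_comp_left (Polynomial.evalRingHom t) (algebraMap ℝ (Polynomial ℝ)) τ h
  rw [aeval_def]
  simp only [Polynomial.coe_evalRingHom] at this
  rw [this]
  have h2 : (Polynomial.evalRingHom t).comp (algebraMap ℝ (Polynomial ℝ)) = RingHom.id ℝ := by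
    ext x; simp
  rw [h2]
  rfl

lemma pderiv0_aeval (τ : Fin 2 → BPoly) (j : Fin 2) (h1 : pderiv 0 (τ j) = 1)
    (h2 : ∀ i, i ≠ j → pderiv 0 (τ i) = 0) (h : BPoly) :
    pderiv 0 (aeval τ h) = aeval τ (pderiv j h) := by
  induction h using MvPolynomial.induction_on with
  | C a => simp
  | add p q hp hq => rw [map_add, map_add, hp, hq, map_add, map_add]
  | mul_X p i hp =>
      have key : pderiv 0 (τ i) = aeval τ (pderiv j (X i : BPoly)) := by
        by_cases hij : i = j
        · subst hij; rw [h1, pderiv_X_self, map_one]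
        · rw [h2 i hij, pderiv_X_of_ne hij, map_zero]
      rw [map_mul, aeval_X, pderiv_mul, hp, pderiv_mul, map_add, map_mul, map_mul, aeval_X, key]

lemma pderiv0_aeval_iter (τ : Fin 2 → BPoly) (j : Fin 2) (h1 : pderiv 0 (τ j) = 1)
    (h2 : ∀ i, i ≠ j → pderiv 0 (τ i) = 0) (m : ℕ) (h : BPoly) :
    (⇑(pderiv (0 : Fin 2)))^[m] (aeval τ h) = aeval τ ((⇑(pderiv j))^[m] h) := by
  induction m generalizing h with
  | zero => rfl
  | succ m ih =>
      rw [Function.iterate_succ_apply, Function.iterate_succ_apply,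
        pderiv0_aeval τ j h1 h2 h, ih]


def sub0 : BPoly →ₐ[ℝ] BPoly := aeval ![0, X 1]

lemma X0_dvd_sub_sub0 (h : BPoly) : (X 0 : BPoly) ∣ h - sub0 h := by
  induction h using MvPolynomial.induction_on with
  | C a => simp [sub0]
  | add p q hp hq =>
      have : p + q - sub0 (p + q) = (p - sub0 p) + (q - sub0 q) := by rw [map_add]; ring
      rw [this]; exact dvd_add hp hq
  | mul_X p i hp =>
      have : p * X i - sub0 (p * X i)
          = (p - sub0 p) * X i + sub0 p * (X i - sub0 (X i)) := by
        rw [map_mul]; ring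
      rw [this]
      refine dvd_add (Dvd.dvd.mul_right hp _) (Dvd.dvd.mul_left ?_ _)
      fin_cases i <;> simp [sub0]

lemma pderiv0_iter_X0_mul (m : ℕ) (g : BPoly) :
    (⇑(pderiv (0:Fin 2)))^[m+1] (X 0 * g)
      = X 0 * (⇑(pderiv (0:Fin 2)))^[m+1] g + C ((m:ℝ)+1) * (⇑(pderiv (0:Fin 2)))^[m] g := by
  induction m with
  | zero =>
      simp only [zero_add, Function.iterate_one, Function.iterate_zero_apply, Nat.cast_zero]
      rw [pderiv_mul, pderiv_X_self, C_1]
      ring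
  | succ m ih =>
      have e1 : (⇑(pderiv (0:Fin 2)))^[m+1+1] (X 0 * g)
          = pderiv 0 (X 0 * (⇑(pderiv (0:Fin 2)))^[m+1] g
              + C ((m:ℝ)+1) * (⇑(pderiv (0:Fin 2)))^[m] g) := by
        rw [Function.iterate_succ_apply' _ (m+1), ih]
      rw [e1, map_add, pderiv_mul, pderiv_mul, pderiv_X_self, pderiv_C,
        ← Function.iterate_succ_apply' (⇑(pderiv (0:Fin 2))) (m+1) g,
        ← Function.iterate_succ_apply' (⇑(pderiv (0:Fin 2))) m g]
      have hc : (C ((((m+1):ℕ):ℝ)+1) : BPoly) = C ((m:ℝ)+1) + 1 := by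
        push_cast
        rw [map_add, C_1]
      rw [hc]
      simp only [one_mul, zero_mul, zero_add, add_mul]
      abel


lemma X0_dvd_of_vanish (h : BPoly) (H0 : ∀ y : ℝ, eval ![0, y] h = 0) : (X 0 : BPoly) ∣ h := by
  have hz : sub0 h = 0 := by
    apply MvPolynomial.funext
    intro v
    show eval v (aeval ![0, X 1] h) = eval v 0
    rw [eval_aeval, map_zero]
    have hfun : (fun i => eval v (![(0:BPoly), X 1] i)) = ![0, v 1] := by
      funext i; fin_cases i <;> simp
    rw [hfun, H0 (v 1)]
  have hd := X0_dvd_sub_sub0 h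
  rwa [hz, sub_zero] at hd

lemma core_factor (k : ℕ) (h : BPoly)
    (H : ∀ j, j ≤ k → ∀ y : ℝ, eval ![0, y] ((⇑(pderiv (0:Fin 2)))^[j] h) = 0) :
    ∃ r : BPoly, h = X 0 ^ (k+1) * r := by
  induction k generalizing h with
  | zero =>
      obtain ⟨r, hr⟩ := X0_dvd_of_vanish h (by simpa using H 0 le_rfl)
      exact ⟨r, by rw [pow_one]; exact hr⟩
  | succ k ih =>
      obtain ⟨h₁, hh₁⟩ := X0_dvd_of_vanish h (by simpa using H 0 (Nat.zero_le _))
      have H₁ : ∀ j, j ≤ k → ∀ y : ℝ, eval ![0, y] ((⇑(pderiv (0:Fin 2)))^[j] h₁) = 0 := by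
        intro j hj y
        have := H (j+1) (by omega) y
        rw [hh₁, pderiv0_iter_X0_mul j h₁, map_add, map_mul, map_mul, eval_X] at this
        simp only [Matrix.cons_val_zero, zero_mul, zero_add, eval_C] at this
        have hne : ((j:ℝ)+1) ≠ 0 := by positivity
        exact (mul_eq_zero.1 this).resolve_left hne
      obtain ⟨r, hr⟩ := ih h₁ H₁
      exact ⟨r, by rw [hh₁, hr]; ring⟩


/-- generic wrapper: substitution τ with pderiv0 τ jv = δ, plus point maps. -/
lemma factor_gen (k : ℕ) (h : BPoly) (τ σ : Fin 2 → BPoly) (jv : Fin 2)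
    (hτ1 : pderiv 0 (τ jv) = 1) (hτ2 : ∀ i, i ≠ jv → pderiv 0 (τ i) = 0)
    (L : ℝ → Fin 2 → ℝ)  -- parametrization of the line by y ↦ point (as eval vector)
    (hL : ∀ y : ℝ, (fun i => eval ![0, y] (τ i)) = L y)
    (w : Pt → Fin 2 → ℝ)
    (hw : ∀ p : Pt, (fun i => eval (w p) (τ i)) = ![p.1, p.2])
    (hσ : ∀ p : Pt, (fun i => eval ![p.1, p.2] (σ i)) = w p)
    (H : ∀ j, j ≤ k → ∀ y : ℝ, eval (L y) ((⇑(pderiv jv))^[j] h) = 0) :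
    ∃ r : BPoly, ∀ p : Pt, evalP h p = (w p 0)^(k+1) * evalP r p := by
  obtain ⟨r', hr'⟩ := core_factor k (aeval τ h) (by
    intro j hj y
    rw [pderiv0_aeval_iter τ jv hτ1 hτ2 j h, eval_aeval, hL y]
    exact H j hj y)
  refine ⟨aeval σ r', fun p => ?_⟩
  have e1 : evalP h p = eval (w p) (aeval τ h) := by
    rw [eval_aeval, hw p]; rfl
  rw [e1, hr', map_mul, map_pow, eval_X]
  show (w p 0)^(k+1) * _ = _
  congr 1
  show _ = evalP (aeval σ r') p
  unfold evalP
  rw [eval_aeval, hσ p]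


lemma contDiff_evalP (n : WithTop ℕ∞) (q : BPoly) : ContDiff ℝ n (evalP q) := by
  induction q using MvPolynomial.induction_on with
  | C a =>
      have : evalP (C a) = fun _ : Pt => a := by funext x; simp [evalP]
      rw [this]; exact contDiff_const
  | add p q hp hq =>
      have : evalP (p + q) = fun x => evalP p x + evalP q x := by
        funext x; simp [evalP]
      rw [this]; exact hp.add hq
  | mul_X p i hp =>
      have : evalP (p * X i) = fun x => evalP p x * evalP (X i) x := by
        funext x; simp [evalP]
      rw [this]
      refine hp.mul ?_
      have : evalP (X i) = fun x : Pt => (![x.1, x.2] : Fin 2 → ℝ) i := by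
        funext x; simp [evalP]
      rw [this]
      fin_cases i
      · simpa using contDiff_fst
      · simpa using contDiff_snd

lemma hasDerivAt_reluPow (m : ℕ) (t : ℝ) :
    HasDerivAt (fun t : ℝ => max t 0 ^ (m+2)) (((m:ℝ)+2) * max t 0 ^ (m+1)) t := by
  rcases lt_trichotomy t 0 with ht | rfl | ht
  · have hev : (fun t : ℝ => max t 0 ^ (m+2)) =ᶠ[nhds t] fun _ => 0 := by
      filter_upwards [eventually_lt_nhds ht] with x hx
      rw [max_eq_right hx.le, zero_pow (by omega)]
    rw [max_eq_right ht.le, zero_pow (by omega : m + 1 ≠ 0), mul_zero]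
    exact (hasDerivAt_const t 0).congr_of_eventuallyEq hev
  · rw [max_self, zero_pow (by omega : m + 1 ≠ 0), mul_zero]
    rw [hasDerivAt_iff_isLittleO]
    have heq : (fun x : ℝ => max x 0 ^ (m+2) - max (0:ℝ) 0 ^ (m+2) - (x - 0) • (0:ℝ))
        = fun x : ℝ => max x 0 ^ (m+2) := by
      funext x
      rw [max_self, zero_pow (by omega : m + 2 ≠ 0), smul_zero, sub_zero, sub_zero]
    rw [heq, Asymptotics.isLittleO_iff]
    intro c hc
    have hev : ∀ᶠ x : ℝ in nhds 0, |x - 0| < min c 1 :=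
      eventually_abs_sub_lt 0 (lt_min hc one_pos)
    filter_upwards [hev] with x hx
    rw [sub_zero] at hx
    have h1 : |max x 0| ≤ |x| := by
      rcases le_or_gt x 0 with h | h
      · rw [max_eq_right h]; simp
      · rw [max_eq_left h.le]
    have h2 : ‖max x 0 ^ (m+2)‖ ≤ |x| ^ (m+2) := by
      rw [norm_pow]
      gcongr
      exact h1
    have hxle1 : |x| ≤ 1 := le_of_lt (lt_of_lt_of_le hx (min_le_right c 1))
    have hpow : |x| ^ (m+1) ≤ c :=
      le_trans (le_trans (pow_le_of_le_one (abs_nonneg x) hxle1 (by omega)) (le_of_lt hx))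
        (min_le_left c 1)
    calc ‖max x 0 ^ (m+2)‖ ≤ |x| ^ (m+2) := h2
      _ = |x| ^ (m+1) * |x| := by ring
      _ ≤ c * |x| := mul_le_mul_of_nonneg_right hpow (abs_nonneg x)
      _ = c * ‖x - 0‖ := by rw [sub_zero, Real.norm_eq_abs]
  · have hev : (fun t : ℝ => max t 0 ^ (m+2)) =ᶠ[nhds t] fun x => x ^ (m+2) := by
      filter_upwards [eventually_gt_nhds ht] with x hx
      rw [max_eq_left hx.le]
    rw [max_eq_left ht.le]
    have h2 := (hasDerivAt_pow (m+2) t).congr_of_eventuallyEq hev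
    refine h2.congr_deriv ?_
    rw [show m + 2 - 1 = m + 1 by omega]
    push_cast
    ring

lemma contDiff_reluPow (n : ℕ) : ContDiff ℝ (n : WithTop ℕ∞) (fun t : ℝ => max t 0 ^ (n+1)) := by
  induction n with
  | zero =>
      rw [show ((0:ℕ):WithTop ℕ∞) = 0 by rfl, contDiff_zero]
      exact (continuous_max.comp (continuous_id.prodMk continuous_const)).pow 1
  | succ n ih =>
      rw [show ((n+1:ℕ):WithTop ℕ∞) = (n:ℕ) + 1 by norm_cast, contDiff_succ_iff_deriv]
      refine ⟨fun t => (hasDerivAt_reluPow n t).differentiableAt, by simp, ?_⟩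
      have : deriv (fun t : ℝ => max t 0 ^ (n+2)) = fun t => ((n:ℝ)+2) * max t 0 ^ (n+1) := by
        funext t; exact (hasDerivAt_reluPow n t).deriv
      rw [this]
      exact contDiff_const.mul ih


/-- the triangle on the ≤ side of an edge's line -/
def elo (ε : Edge) : Tri :=
  if ε.2 = 0 then ⟨(ε.1.1, ε.1.2 - 1), true⟩
  else if ε.2 = 1 then ⟨(ε.1.1 - 1, ε.1.2), false⟩
  else ⟨ε.1, true⟩

/-- the triangle on the ≥ side -/
def ehi (ε : Edge) : Tri :=
  if ε.2 = 0 then ⟨ε.1, false⟩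
  else if ε.2 = 1 then ⟨ε.1, true⟩
  else ⟨ε.1, false⟩

/-- signed affine functional vanishing on the edge's line -/
def lf (ε : Edge) (p : Pt) : ℝ :=
  if ε.2 = 0 then p.2 - ε.1.2
  else if ε.2 = 1 then p.1 - ε.1.1
  else (p.1 - p.2) - ((ε.1.1 : ℝ) - ε.1.2)

lemma edge_mem_iff (T : Tri) (ε : Edge) : ε ∈ T.edges ↔ T = elo ε ∨ T = ehi ε := by
  obtain ⟨⟨v1, v2⟩, u⟩ := T
  obtain ⟨⟨a, b⟩, i⟩ := ε
  fin_cases i <;> cases u <;>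
    simp [Tri.edges, elo, ehi, Prod.ext_iff, Tri.mk.injEq, Fin.ext_iff] <;> omega

lemma elo_ne_ehi (ε : Edge) : elo ε ≠ ehi ε := by
  obtain ⟨⟨a, b⟩, i⟩ := ε
  fin_cases i <;> simp [elo, ehi]

lemma mem_edges_elo (ε : Edge) : ε ∈ (elo ε).edges := by
  rw [edge_mem_iff]; left; rfl

lemma mem_edges_ehi (ε : Edge) : ε ∈ (ehi ε).edges := by
  rw [edge_mem_iff]; right; rfl

lemma continuous_lf (ε : Edge) : Continuous (lf ε) := by
  unfold lf
  split
  · exact continuous_snd.sub continuous_const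
  split
  · exact continuous_fst.sub continuous_const
  · exact (continuous_fst.sub continuous_snd).sub continuous_const

lemma cl_elo_subset (ε : Edge) : (elo ε).cl ⊆ {p : Pt | lf ε p ≤ 0} := by
  apply closure_minimal
  · obtain ⟨⟨a, b⟩, i⟩ := ε
    intro p hp
    fin_cases i <;>
      simp [elo, Tri.toSet, lf] at hp ⊢ <;>
      push_cast at hp ⊢ <;> linarith [hp.1, hp.2.1, hp.2.2]
  · exact isClosed_le (continuous_lf ε) continuous_const

lemma cl_ehi_subset (ε : Edge) : (ehi ε).cl ⊆ {p : Pt | 0 ≤ lf ε p} := by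
  apply closure_minimal
  · obtain ⟨⟨a, b⟩, i⟩ := ε
    intro p hp
    fin_cases i <;>
      simp [ehi, Tri.toSet, lf] at hp ⊢ <;>
      push_cast at hp ⊢ <;> linarith [hp.1, hp.2.1, hp.2.2]
  · exact isClosed_le continuous_const (continuous_lf ε)

lemma closure_aux {S : Set Pt} (p w : Pt) (η : ℝ) (hη : 0 < η)
    (h : ∀ δ : ℝ, 0 < δ → δ < η → (p.1 + δ * w.1, p.2 + δ * w.2) ∈ S) :
    p ∈ closure S := by
  rw [mem_closure_iff_seq_limit]
  refine ⟨fun n => (p.1 + (η / (n+2)) * w.1, p.2 + (η / (n+2)) * w.2), fun n => ?_, ?_⟩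
  · apply h
    · positivity
    · have h1 : (1:ℝ) < (n:ℝ) + 2 := by
        have : (0:ℝ) ≤ (n:ℝ) := Nat.cast_nonneg n
        linarith
      exact div_lt_self hη h1
  · have hδ : Filter.Tendsto (fun n : ℕ => η / ((n:ℝ)+2)) Filter.atTop (nhds 0) := by
      apply Filter.Tendsto.div_atTop tendsto_const_nhds
      exact Filter.tendsto_atTop_add_const_right _ 2 tendsto_natCast_atTop_atTop
    have c1 : Filter.Tendsto (fun n : ℕ => p.1 + (η / ((n:ℝ)+2)) * w.1) Filter.atTop
        (nhds (p.1 + 0 * w.1)) := Filter.Tendsto.const_add _ (hδ.mul_const _)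
    have c2 : Filter.Tendsto (fun n : ℕ => p.2 + (η / ((n:ℝ)+2)) * w.2) Filter.atTop
        (nhds (p.2 + 0 * w.2)) := Filter.Tendsto.const_add _ (hδ.mul_const _)
    rw [zero_mul, add_zero] at c1 c2
    exact Filter.Tendsto.prodMk_nhds c1 c2

lemma seg_subset_cl (ε : Edge) : ε.seg ⊆ (elo ε).cl ∩ (ehi ε).cl := by
  obtain ⟨⟨a, b⟩, i⟩ := ε
  rintro p ⟨t, ht0, ht1, rfl⟩
  fin_cases i
  · constructor
    · refine closure_aux _ (0, -1) (1 - t) (by linarith) fun δ hδ0 hδη => ?_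
      simp only [elo, Tri.toSet, dirZ]
      norm_num [Fin.ext_iff]
      try dsimp only
      push_cast
      refine ⟨by linarith, by linarith, by linarith⟩
    · refine closure_aux _ (0, 1) t (by linarith) fun δ hδ0 hδη => ?_
      simp only [ehi, Tri.toSet, dirZ]
      norm_num [Fin.ext_iff]
      try dsimp only
      push_cast
      refine ⟨by linarith, by linarith, by linarith⟩
  · constructor
    · refine closure_aux _ (-1, 0) (1 - t) (by linarith) fun δ hδ0 hδη => ?_
      simp only [elo, Tri.toSet, dirZ]
      norm_num [Fin.ext_iff]
      try dsimp only
      push_cast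
      refine ⟨by linarith, by linarith, by linarith⟩
    · refine closure_aux _ (1, 0) t (by linarith) fun δ hδ0 hδη => ?_
      simp only [ehi, Tri.toSet, dirZ]
      norm_num [Fin.ext_iff]
      try dsimp only
      push_cast
      refine ⟨by linarith, by linarith, by linarith⟩
  · constructor
    · refine closure_aux _ (0, 1) (1 - t) (by linarith) fun δ hδ0 hδη => ?_
      simp only [elo, Tri.toSet, dirZ]
      norm_num [Fin.ext_iff]
      try dsimp only
      push_cast
      refine ⟨by linarith, by linarith, by linarith⟩
    · refine closure_aux _ (1, 0) (1 - t) (by linarith) fun δ hδ0 hδη => ?_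
      simp only [ehi, Tri.toSet, dirZ]
      norm_num [Fin.ext_iff]
      try dsimp only
      push_cast
      refine ⟨by linarith, by linarith, by linarith⟩

lemma continuous_evalP (q : BPoly) : Continuous (evalP q) := (contDiff_evalP 0 q).continuous

lemma piece_on_cl {f : Pt → ℝ} {q : BPoly} {M : Finset Tri} {T : Tri}
    (hf : ContinuousOn f (Mstar M)) (hT : T ∈ M) (hq : EqOn f (evalP q) T.toSet) :
    EqOn f (evalP q) T.cl := by
  intro x hx
  have hclsub : T.cl ⊆ Mstar M := by
    intro y hy; exact Set.mem_biUnion hT hy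
  have hne : (nhdsWithin x T.toSet).NeBot := mem_closure_iff_nhdsWithin_neBot.1 hx
  have h1 : Filter.Tendsto f (nhdsWithin x T.toSet) (nhds (f x)) := by
    have := (hf x (hclsub hx)).mono (Set.Subset.trans subset_closure hclsub)
    exact this
  have h2 : Filter.Tendsto (evalP q) (nhdsWithin x T.toSet) (nhds (evalP q x)) :=
    ((continuous_evalP q).tendsto x).mono_left nhdsWithin_le_nhds
  have h3 : Filter.Tendsto f (nhdsWithin x T.toSet) (nhds (evalP q x)) := by
    refine h2.congr' ?_
    filter_upwards [self_mem_nhdsWithin] with y hy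
    exact (hq hy).symm
  exact tendsto_nhds_unique h1 h3

lemma elo_ehi_inj {e e' : Edge} (h1 : elo e = elo e') (h2 : ehi e = ehi e') : e' = e := by
  obtain ⟨⟨a, b⟩, i⟩ := e
  obtain ⟨⟨a', b'⟩, i'⟩ := e'
  revert h1 h2
  fin_cases i <;> fin_cases i' <;>
    norm_num [elo, ehi, Fin.ext_iff, Tri.mk.injEq, Prod.mk.injEq]
  all_goals (intros; omega)

lemma elo_ehi_inj' {e e' : Edge} (h1 : elo e = ehi e') (h2 : ehi e = elo e') : e' = e := by
  obtain ⟨⟨a, b⟩, i⟩ := e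
  obtain ⟨⟨a', b'⟩, i'⟩ := e'
  revert h1 h2
  fin_cases i <;> fin_cases i' <;>
    norm_num [elo, ehi, Fin.ext_iff, Tri.mk.injEq, Prod.mk.injEq]
  all_goals (intros; omega)

lemma shared_edge_unique {T T' : Tri} (hne : T ≠ T') {ε ε' : Edge}
    (h1 : ε ∈ T.edges) (h2 : ε ∈ T'.edges) (h3 : ε' ∈ T.edges) (h4 : ε' ∈ T'.edges) :
    ε' = ε := by
  rw [edge_mem_iff] at h1 h2 h3 h4
  rcases h1 with h1 | h1 <;> rcases h2 with h2 | h2 <;>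
    rcases h3 with h3 | h3 <;> rcases h4 with h4 | h4 <;>
    first
      | exact absurd (h1.trans h2.symm) hne
      | exact elo_ehi_inj (h1.symm.trans h3) (h2.symm.trans h4)
      | exact elo_ehi_inj' (h1.symm.trans h3) (h2.symm.trans h4)
      | exact elo_ehi_inj (h2.symm.trans h4) (h1.symm.trans h3)
      | exact absurd (h3.trans h4.symm) hne
      | exact elo_ehi_inj' (h2.symm.trans h4) (h1.symm.trans h3)

lemma minLen_eq_one {T T' : Tri} (hne : T ≠ T') (hadj : Adj T T') : minLen T T' = 1 := by
  have h1 : 1 ∈ {m | ∃ c, TriIsChain T T' m c} := by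
    refine ⟨fun k => if k = 0 then T else T', ?_, ?_, ?_⟩
    · simp
    · simp
    · intro k hk
      interval_cases k
      simpa using hadj
  apply le_antisymm (Nat.sInf_le h1)
  rw [Nat.one_le_iff_ne_zero]
  intro h0
  rcases Nat.sInf_eq_zero.1 h0 with h | h
  · obtain ⟨c, hc0, hc1, -⟩ := h
    exact hne (hc0.symm.trans hc1)
  · rw [Set.eq_empty_iff_forall_notMem] at h
    exact h 1 h1

lemma smType_subset {T T' : Tri} (hne : T ≠ T') {ε : Edge}
    (h1 : ε ∈ T.edges) (h2 : ε ∈ T'.edges) : SmType T T' ⊆ {ε.2} := by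
  intro i hi
  obtain ⟨c, hchain, htypes⟩ := hi
  rw [minLen_eq_one hne ⟨hne, ε, h1, h2⟩] at hchain htypes
  obtain ⟨hc0, hc1, -⟩ := hchain
  obtain ⟨k, hk, ε'', hty, he1, he2⟩ := htypes
  interval_cases k
  rw [hc0] at he1
  rw [hc1] at he2
  have := shared_edge_unique hne h1 h2 he1 he2
  subst this
  exact hty ▸ rfl



lemma evalP_sub (p q : BPoly) (x : Pt) : evalP (p - q) x = evalP p x - evalP q x := by
  simp [evalP]

lemma pditer_sub (i : Fin 2) (n : ℕ) (p q : BPoly) :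
    (⇑(pderiv i))^[n] (p - q) = (⇑(pderiv i))^[n] p - (⇑(pderiv i))^[n] q := by
  induction n generalizing p q with
  | zero => rfl
  | succ n ih =>
      rw [Function.iterate_succ_apply, Function.iterate_succ_apply,
        Function.iterate_succ_apply, map_sub, ih]

lemma dirD_e1 : dirD (dirZ 0) = fun q : BPoly => pderiv 0 q := by
  funext q; simp [dirD, dirZ]

lemma dirD_e2 : dirD (dirZ 1) = fun q : BPoly => pderiv 1 q := by
  funext q; simp [dirD, dirZ]

lemma Dmix_ab (a b : ℕ) (q : BPoly) :
    Dmix ![a, b, 0] q = (⇑(pderiv (0:Fin 2)))^[a] ((⇑(pderiv (1:Fin 2)))^[b] q) := by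
  unfold Dmix
  rw [dirD_e1, dirD_e2]
  norm_num
  rfl

lemma mem_Iset (d : Fin 3 → ℕ) (i : Fin 3) (a b : ℕ) (h : a + b ≤ d i) :
    ![a, b, 0] ∈ Iset d i := by
  have h3 : i = 0 ∨ i = 1 ∨ i = 2 := by fin_cases i <;> simp
  rcases h3 with rfl | rfl | rfl
  · show (![a,b,0] : Fin 3 → ℕ) (0+1) + (![a,b,0] : Fin 3 → ℕ) (0+2) ≤ d 0
    have e1 : (![a,b,0] : Fin 3 → ℕ) (0+1) = b := rfl
    have e2 : (![a,b,0] : Fin 3 → ℕ) (0+2) = 0 := rfl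
    rw [e1, e2]; omega
  · show (![a,b,0] : Fin 3 → ℕ) (1+1) + (![a,b,0] : Fin 3 → ℕ) (1+2) ≤ d 1
    have e1 : (![a,b,0] : Fin 3 → ℕ) (1+1) = 0 := rfl
    have e2 : (![a,b,0] : Fin 3 → ℕ) (1+2) = a := rfl
    rw [e1, e2]; omega
  · show (![a,b,0] : Fin 3 → ℕ) (2+1) + (![a,b,0] : Fin 3 → ℕ) (2+2) ≤ d 2
    have e1 : (![a,b,0] : Fin 3 → ℕ) (2+1) = a := rfl
    have e2 : (![a,b,0] : Fin 3 → ℕ) (2+2) = b := rfl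
    rw [e1, e2]; omega

lemma contDiff_lf (n : WithTop ℕ∞) (ε : Edge) : ContDiff ℝ n (lf ε) := by
  unfold lf
  split
  · exact contDiff_snd.sub contDiff_const
  split
  · exact contDiff_fst.sub contDiff_const
  · exact (contDiff_fst.sub contDiff_snd).sub contDiff_const

lemma diamond_both {M : Finset Tri} {ε : Edge} (hlo : elo ε ∈ M) (hhi : ehi ε ∈ M) :
    diamond M ε = (elo ε).cl ∪ (ehi ε).cl := by
  ext x
  simp only [diamond, Set.mem_iUnion, Finset.mem_filter, Set.mem_union, exists_prop]
  constructor
  · rintro ⟨T, ⟨hTM, hTe⟩, hx⟩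
    rcases (edge_mem_iff T ε).1 hTe with rfl | rfl
    · exact Or.inl hx
    · exact Or.inr hx
  · rintro (hx | hx)
    · exact ⟨elo ε, ⟨hlo, mem_edges_elo ε⟩, hx⟩
    · exact ⟨ehi ε, ⟨hhi, mem_edges_ehi ε⟩, hx⟩

lemma diamond_one {M : Finset Tri} {ε : Edge} {T₀ : Tri} (h₀ : T₀ ∈ M) (he : ε ∈ T₀.edges)
    (huniq : ∀ T ∈ M, ε ∈ T.edges → T = T₀) : diamond M ε = T₀.cl := by
  ext x
  simp only [diamond, Set.mem_iUnion, Finset.mem_filter, exists_prop]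
  constructor
  · rintro ⟨T, ⟨hTM, hTe⟩, hx⟩
    rwa [huniq T hTM hTe] at hx
  · intro hx
    exact ⟨T₀, ⟨h₀, he⟩, hx⟩

lemma line_vanish (D : BPoly) (x0 y0 u1 u2 : ℝ)
    (H : ∀ t : ℝ, 0 < t → t < 1 → evalP D (x0 + u1 * t, y0 + u2 * t) = 0) :
    ∀ p : Pt, ∀ t : ℝ, p = (x0 + u1 * t, y0 + u2 * t) → evalP D p = 0 := by
  set uP : Polynomial ℝ := aeval
    ![Polynomial.C x0 + Polynomial.C u1 * Polynomial.X,
      Polynomial.C y0 + Polynomial.C u2 * Polynomial.X] D with huP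
  have hev : ∀ t : ℝ, Polynomial.eval t uP = evalP D (x0 + u1 * t, y0 + u2 * t) := by
    intro t
    rw [huP, evalPoly_aeval]
    show _ = MvPolynomial.eval ![x0 + u1 * t, y0 + u2 * t] D
    have hfun : (fun i => Polynomial.eval t
        (![Polynomial.C x0 + Polynomial.C u1 * Polynomial.X,
           Polynomial.C y0 + Polynomial.C u2 * Polynomial.X] i)) = ![x0 + u1 * t, y0 + u2 * t] := by
      funext i; fin_cases i <;> simp
    rw [hfun]
  have hzero : uP = 0 := by
    apply Polynomial.eq_zero_of_infinite_isRoot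
    apply Set.Infinite.mono (s := Set.Ioo (0:ℝ) 1)
    · intro t ht
      show Polynomial.IsRoot uP t
      rw [Polynomial.IsRoot, hev t, H t ht.1 ht.2]
    · exact Set.Ioo_infinite (by norm_num)
  rintro p t rfl
  rw [← hev t, hzero, Polynomial.eval_zero]

lemma factor0 (k : ℕ) (c : ℝ) (h : BPoly)
    (H : ∀ j, j ≤ k → ∀ x : ℝ, evalP ((⇑(pderiv (1:Fin 2)))^[j] h) (x, c) = 0) :
    ∃ r : BPoly, ∀ p : Pt, evalP h p = (p.2 - c) ^ (k+1) * evalP r p := by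
  have := factor_gen k h ![X 1, X 0 + C c] ![X 1 - C c, X 0] 1
    (by simp) (by intro i hi; fin_cases i <;> simp_all)
    (fun y => ![y, c])
    (by intro y; funext i; fin_cases i <;> simp)
    (fun p => ![p.2 - c, p.1])
    (by intro p; funext i; fin_cases i <;> simp)
    (by intro p; funext i; fin_cases i <;> simp)
    (fun j hj y => H j hj y)
  simpa using this

lemma factor1 (k : ℕ) (c : ℝ) (h : BPoly)
    (H : ∀ j, j ≤ k → ∀ y : ℝ, evalP ((⇑(pderiv (0:Fin 2)))^[j] h) (c, y) = 0) :
    ∃ r : BPoly, ∀ p : Pt, evalP h p = (p.1 - c) ^ (k+1) * evalP r p := by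
  have := factor_gen k h ![X 0 + C c, X 1] ![X 0 - C c, X 1] 0
    (by simp) (by intro i hi; fin_cases i <;> simp_all)
    (fun y => ![c, y])
    (by intro y; funext i; fin_cases i <;> simp)
    (fun p => ![p.1 - c, p.2])
    (by intro p; funext i; fin_cases i <;> simp)
    (by intro p; funext i; fin_cases i <;> simp)
    (fun j hj y => H j hj y)
  simpa using this

lemma factor2 (k : ℕ) (c : ℝ) (h : BPoly)
    (H : ∀ j, j ≤ k → ∀ y : ℝ, evalP ((⇑(pderiv (0:Fin 2)))^[j] h) (y + c, y) = 0) :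
    ∃ r : BPoly, ∀ p : Pt, evalP h p = (p.1 - p.2 - c) ^ (k+1) * evalP r p := by
  have := factor_gen k h ![X 0 + X 1 + C c, X 1] ![X 0 - X 1 - C c, X 1] 0
    (by simp) (by intro i hi; fin_cases i <;> simp_all)
    (fun y => ![y + c, y])
    (by intro y; funext i; fin_cases i <;> simp)
    (fun p => ![p.1 - p.2 - c, p.2])
    (by intro p; funext i; fin_cases i <;> simp [add_comm, sub_add_cancel]; ring)
    (by intro p; funext i; fin_cases i <;> simp)
    (fun j hj y => H j hj y)
  simpa using this

lemma glue_end {f : Pt → ℝ} (Tl Th : Tri) (q q' r : BPoly) (k : ℕ) (ℓ : Pt → ℝ)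
    (hℓ : ContDiff ℝ (k : WithTop ℕ∞) ℓ)
    (hTl : Set.EqOn f (evalP q) Tl.cl) (hTh : Set.EqOn f (evalP q') Th.cl)
    (hlo : Tl.cl ⊆ {p : Pt | ℓ p ≤ 0}) (hhi : Th.cl ⊆ {p : Pt | 0 ≤ ℓ p})
    (hfac : ∀ p : Pt, evalP q' p - evalP q p = (ℓ p) ^ (k+1) * evalP r p) :
    ContDiffOn ℝ (k : WithTop ℕ∞) f (Tl.cl ∪ Th.cl) := by
  have hg : ContDiff ℝ (k : WithTop ℕ∞)
      (fun p : Pt => evalP q p + max (ℓ p) 0 ^ (k+1) * evalP r p) := by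
    refine (contDiff_evalP _ q).add (ContDiff.mul ?_ (contDiff_evalP _ r))
    exact ((contDiff_reluPow k).comp hℓ : ContDiff ℝ (k : WithTop ℕ∞) fun p => max (ℓ p) 0 ^ (k+1))
  refine hg.contDiffOn.congr ?_
  intro x hx
  rcases hx with hx | hx
  · have h0 : max (ℓ x) 0 = 0 := max_eq_right (hlo hx)
    rw [hTl hx, h0, zero_pow (Nat.succ_ne_zero k), zero_mul, add_zero]
  · have h0 : max (ℓ x) 0 = ℓ x := max_eq_left (hhi hx)
    rw [hTh hx, h0]
    have := hfac x
    linarith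



lemma strong_edge_smooth (M : Finset Tri) (V : Set BPoly) (d : Fin 3 → ℕ) (f : Pt → ℝ)
    (hf : f ∈ StrongSpline M V d) (ε : Edge) (hex : ∃ T ∈ M, ε ∈ T.edges) :
    ContDiffOn ℝ (d ε.2) f (diamond M ε) := by
  obtain ⟨⟨hcont, hpoly⟩, hstrong⟩ := hf
  by_cases hlo : elo ε ∈ M <;> by_cases hhi : ehi ε ∈ M
  · -- both triangles present
    obtain ⟨q, hqV, hq⟩ := hpoly _ hlo
    obtain ⟨q', hq'V, hq'⟩ := hpoly _ hhi
    have hqcl : Set.EqOn f (evalP q) (elo ε).cl := piece_on_cl hcont hlo hq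
    have hq'cl : Set.EqOn f (evalP q') (ehi ε).cl := piece_on_cl hcont hhi hq'
    rw [diamond_both hlo hhi]
    have hder : ∀ a b : ℕ, a + b ≤ d ε.2 → ∀ x ∈ ε.seg,
        evalP ((⇑(pderiv (0:Fin 2)))^[a] ((⇑(pderiv (1:Fin 2)))^[b] (q' - q))) x = 0 := by
      intro a b hab x hx
      have hxcl := seg_subset_cl ε hx
      have hmain := hstrong _ hlo _ hhi ⟨x, hxcl⟩ ![a,b,0]
        (fun i hi => by
          have hi2 := smType_subset (elo_ne_ehi ε) (mem_edges_elo ε) (mem_edges_ehi ε) hi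
          rw [Set.mem_singleton_iff] at hi2
          subst hi2
          exact mem_Iset d ε.2 a b hab)
        q q' hq hq' x hxcl
      rw [Dmix_ab, Dmix_ab] at hmain
      rw [pditer_sub, pditer_sub, evalP_sub, sub_eq_zero]
      exact hmain.symm
    obtain ⟨⟨av, bv⟩, ι⟩ := ε
    fin_cases ι
    · -- horizontal edge, line y = bv
      have hline : ∀ j, j ≤ d (0 : Fin 3) → ∀ x : ℝ,
          evalP ((⇑(pderiv (1:Fin 2)))^[j] (q' - q)) (x, (bv:ℝ)) = 0 := by
        intro j hj x
        refine line_vanish _ (av:ℝ) (bv:ℝ) 1 0 (fun t ht0 ht1 => ?_) _ (x - av) ?_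
        · have hseg : ((av:ℝ) + 1 * t, (bv:ℝ) + 0 * t) ∈ Edge.seg ((av,bv), (0 : Fin 3)) := by
            refine ⟨t, ht0, ht1, ?_⟩
            rw [Prod.mk.injEq]
            constructor <;> simp [dirZ] <;> ring
          have := hder 0 j (by simpa using hj) _ hseg
          simpa using this
        · rw [Prod.mk.injEq]; constructor <;> ring
      obtain ⟨r, hr⟩ := factor0 (d (0 : Fin 3)) (bv:ℝ) (q' - q) hline
      refine glue_end _ _ q q' r (d (0 : Fin 3)) (lf ((av,bv), (0 : Fin 3)))
        (contDiff_lf _ _) hqcl hq'cl (cl_elo_subset _) (cl_ehi_subset _) ?_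
      intro p
      have := hr p
      rw [evalP_sub] at this
      simpa [lf] using this
    · -- vertical edge, line x = av
      have hline : ∀ j, j ≤ d (1 : Fin 3) → ∀ y : ℝ,
          evalP ((⇑(pderiv (0:Fin 2)))^[j] (q' - q)) ((av:ℝ), y) = 0 := by
        intro j hj y
        refine line_vanish _ (av:ℝ) (bv:ℝ) 0 1 (fun t ht0 ht1 => ?_) _ (y - bv) ?_
        · have hseg : ((av:ℝ) + 0 * t, (bv:ℝ) + 1 * t) ∈ Edge.seg ((av,bv), (1 : Fin 3)) := by
            refine ⟨t, ht0, ht1, ?_⟩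
            rw [Prod.mk.injEq]
            constructor <;> simp [dirZ] <;> ring
          have := hder j 0 (by simpa using hj) _ hseg
          simpa using this
        · rw [Prod.mk.injEq]; constructor <;> ring
      obtain ⟨r, hr⟩ := factor1 (d (1 : Fin 3)) (av:ℝ) (q' - q) hline
      refine glue_end _ _ q q' r (d (1 : Fin 3)) (lf ((av,bv), (1 : Fin 3)))
        (contDiff_lf _ _) hqcl hq'cl (cl_elo_subset _) (cl_ehi_subset _) ?_
      intro p
      have := hr p
      rw [evalP_sub] at this
      simpa [lf] using this
    · -- diagonal edge, line x - y = av - bv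
      have hline : ∀ j, j ≤ d (2 : Fin 3) → ∀ y : ℝ,
          evalP ((⇑(pderiv (0:Fin 2)))^[j] (q' - q)) (y + ((av:ℝ) - bv), y) = 0 := by
        intro j hj y
        refine line_vanish _ (av:ℝ) (bv:ℝ) 1 1 (fun t ht0 ht1 => ?_) _ (y - bv) ?_
        · have hseg : ((av:ℝ) + 1 * t, (bv:ℝ) + 1 * t) ∈ Edge.seg ((av,bv), (2 : Fin 3)) := by
            refine ⟨t, ht0, ht1, ?_⟩
            rw [Prod.mk.injEq]
            constructor <;> simp [dirZ] <;> ring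
          have := hder j 0 (by simpa using hj) _ hseg
          simpa using this
        · rw [Prod.mk.injEq]; constructor <;> ring
      obtain ⟨r, hr⟩ := factor2 (d (2 : Fin 3)) ((av:ℝ) - bv) (q' - q) hline
      refine glue_end _ _ q q' r (d (2 : Fin 3)) (lf ((av,bv), (2 : Fin 3)))
        (contDiff_lf _ _) hqcl hq'cl (cl_elo_subset _) (cl_ehi_subset _) ?_
      intro p
      have := hr p
      rw [evalP_sub] at this
      simpa [lf] using this
  · -- only the lower triangle
    obtain ⟨q, hqV, hq⟩ := hpoly _ hlo
    rw [diamond_one hlo (mem_edges_elo ε) (fun T hT hTe => by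
      rcases (edge_mem_iff T ε).1 hTe with rfl | rfl
      · rfl
      · exact absurd hT hhi)]
    exact ((contDiff_evalP _ q).contDiffOn).congr (piece_on_cl hcont hlo hq)
  · -- only the upper triangle
    obtain ⟨q, hqV, hq⟩ := hpoly _ hhi
    rw [diamond_one hhi (mem_edges_ehi ε) (fun T hT hTe => by
      rcases (edge_mem_iff T ε).1 hTe with rfl | rfl
      · exact absurd hT hlo
      · rfl)]
    exact ((contDiff_evalP _ q).contDiffOn).congr (piece_on_cl hcont hhi hq)
  · exfalso
    obtain ⟨T, hT, hTe⟩ := hex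
    rcases (edge_mem_iff T ε).1 hTe with rfl | rfl
    · exact hlo hT
    · exact hhi hT


/-- `Ŝ^d(M,V) ⊆ S^d(M,V)`, and every strongly regular spline
is globally of class `C^r` on `M*` with `r = min{d₁,d₂,d₃}`: all derivatives
`D_s` with `s₁+s₂+s₃ ≤ r` of its polynomial pieces agree wherever the closed
triangles of `M` meet. -/
theorem statement14 (M : Finset Tri) (hM : M.Nonempty) (V : Submodule ℝ BPoly)
    (d : Fin 3 → ℕ) :
    StrongSpline M (V : Set BPoly) d ⊆ SplineSpace M (V : Set BPoly) d ∧
    ∀ f ∈ StrongSpline M (V : Set BPoly) d, ∀ s : Fin 3 → ℕ,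
      s 0 + s 1 + s 2 ≤ min (min (d 0) (d 1)) (d 2) →
      ∀ T ∈ M, ∀ T' ∈ M, ∀ q q' : BPoly, IsPiece f T q → IsPiece f T' q' →
        ∀ x ∈ T.cl ∩ T'.cl, evalP (Dmix s q) x = evalP (Dmix s q') x := by
  constructor
  · intro f hf
    exact ⟨hf.1, fun ε hε => strong_edge_smooth M _ d f hf ε hε⟩
  · intro f hf s hs T hT T' hT' q q' hq hq' x hx
    refine hf.2 T hT T' hT' ⟨x, hx⟩ s (fun i _ => ?_) q q' hq hq' x hx
    have h3 : i = 0 ∨ i = 1 ∨ i = 2 := by fin_cases i <;> simp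
    rcases h3 with rfl | rfl | rfl
    · show s (0+1) + s (0+2) ≤ d 0
      have e1 : s (0+1) = s 1 := rfl
      have e2 : s (0+2) = s 2 := rfl
      rw [e1, e2]
      omega
    · show s (1+1) + s (1+2) ≤ d 1
      have e1 : s (1+1) = s 2 := rfl
      have e2 : s (1+2) = s 0 := rfl
      rw [e1, e2]
      omega
    · show s (2+1) + s (2+2) ≤ d 2
      have e1 : s (2+1) = s 0 := rfl
      have e2 : s (2+2) = s 1 := rfl
      rw [e1, e2]
      omega

end
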